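/- Let g be a finite-dimensional real Lie algebra equipped with an invariant inner product, let h be a Lie subalgebra of g containing no nonzero ideal of g, and let m be the orthogonal complement of h in g. Suppose m = m_1 ⊕ … ⊕ m_k is an orthogonal direct sum decomposition into subspaces with [h, m_i] ⊆ m_i for each i, and suppose that pr_m([Λ(u), u]) = 0 for every u ∈ m and every metric operator Λ. Then the subspaces g_i := [m_i, m_i] + m_i are ideals of g, [g_i, g_j] = 0 for i ≠ j, g = g_1 ⊕ … ⊕ g_k as a direct sum of ideals, and h = (h ∩ g_1) ⊕ … ⊕ (h ∩ g_k). -/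

import Mathlib

/- Theorem A (Lie-algebra content of Theorem 3.5):  `g` is a finite-dimensional real
Lie algebra with an invariant inner product `B`, `h` a subalgebra containing no
nonzero ideal of `g`, `m` its orthogonal complement, `prh`/`prm` the projections,
and `m = m₁ ⊕ ⋯ ⊕ m_k` an orthogonal decomposition with `[h, m_i] ⊆ m_i`.
Assuming `pr_m ⁅Λ u, u⁆ = 0` for every `u ∈ m` and every metric operator `Λ`,
the subspaces `g_i = [m_i,m_i] + m_i` are ideals, `⁅g_i, g_j⁆ = 0` for `i ≠ j`,
`g = g₁ ⊕ ⋯ ⊕ g_k` as a direct sum of ideals, and `h = (h∩g₁) ⊕ ⋯ ⊕ (h∩g_k)`. -/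
set_option maxHeartbeats 2000000 in
theorem statement_0
    {g : Type*} [LieRing g] [LieAlgebra ℝ g] [FiniteDimensional ℝ g]
    (B : g →ₗ[ℝ] g →ₗ[ℝ] ℝ)
    (hBsymm : ∀ x y : g, B x y = B y x)
    (hBpos : ∀ x : g, x ≠ 0 → 0 < B x x)
    (hBinv : ∀ x y z : g, B ⁅z, x⁆ y + B x ⁅z, y⁆ = 0)
    (h : LieSubalgebra ℝ g)
    (hnoideal : ∀ I : LieIdeal ℝ g, (∀ x ∈ I, x ∈ h) → I = ⊥)
    (m : Submodule ℝ g)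
    (hm : ∀ x : g, x ∈ m ↔ ∀ y ∈ h, B x y = 0)
    (prh prm : g →ₗ[ℝ] g)
    (hprh : ∀ x : g, prh x ∈ h)
    (hprm : ∀ x : g, prm x ∈ m)
    (hpr : ∀ x : g, prh x + prm x = x)
    (k : ℕ) (mi : Fin k → Submodule ℝ g)
    (hsup : ⨆ i, mi i = m)
    (horth : ∀ i j, i ≠ j → ∀ x ∈ mi i, ∀ y ∈ mi j, B x y = 0)
    (hhmi : ∀ i, ∀ v ∈ h, ∀ x ∈ mi i, ⁅v, x⁆ ∈ mi i)
    (hequi : ∀ Λ : m →ₗ[ℝ] m,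
      (∀ u v : m, B (Λ u : g) (v : g) = B (u : g) (Λ v : g)) →
      (∀ u : m, u ≠ 0 → 0 < B (Λ u : g) (u : g)) →
      (∀ v ∈ h, ∀ w : m, ∀ hvw : ⁅v, (w : g)⁆ ∈ m,
        ((Λ ⟨⁅v, (w : g)⁆, hvw⟩ : m) : g) = ⁅v, (Λ w : g)⁆) →
      ∀ u : m, prm ⁅(Λ u : g), (u : g)⁆ = 0)
    (gi : Fin k → Submodule ℝ g)
    (hgi : ∀ i, gi i =
      Submodule.span ℝ {x : g | ∃ a ∈ mi i, ∃ b ∈ mi i, ⁅a, b⁆ = x} ⊔ mi i) :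
    (∀ i, ∀ x : g, ∀ y ∈ gi i, ⁅x, y⁆ ∈ gi i) ∧
    (∀ i j, i ≠ j → ∀ x ∈ gi i, ∀ y ∈ gi j, ⁅x, y⁆ = 0) ∧
    (∀ x : g, ∃! c : Fin k → g, (∀ i, c i ∈ gi i) ∧ ∑ i, c i = x) ∧
    (∀ x ∈ h, ∃! c : Fin k → g,
      (∀ i, c i ∈ h ∧ c i ∈ gi i) ∧ ∑ i, c i = x) := by
  classical
  -- ## Basic positivity facts
  have hBnonneg : ∀ x : g, 0 ≤ B x x := by
    intro x
    rcases eq_or_ne x 0 with rfl | hne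
    · simp
    · exact (hBpos x hne).le
  have hB0 : ∀ x : g, B x x = 0 → x = 0 := by
    intro x hx
    by_contra hne
    exact (hBpos x hne).ne' hx
  have hmh : ∀ y ∈ h, ∀ x ∈ m, B y x = 0 := by
    intro y hy x hx
    rw [hBsymm]
    exact (hm x).1 hx y hy
  have misubm : ∀ i, mi i ≤ m := fun i => hsup ▸ le_iSup mi i
  -- membership in `h` from orthogonality to `m`
  have memh_of_perp : ∀ x : g, (∀ y ∈ m, B x y = 0) → x ∈ h := by
    intro x hx
    have h2 : B (prh x) (prm x) = 0 := hmh _ (hprh x) _ (hprm x)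
    have h3 : B (prh x) (prm x) + B (prm x) (prm x) = B x (prm x) := by
      rw [← LinearMap.add_apply, ← map_add, hpr]
    have h1 : prm x = 0 := by
      apply hB0
      have h4 := hx (prm x) (hprm x)
      linarith
    have h5 := hpr x
    rw [h1, add_zero] at h5
    rw [← h5]
    exact hprh x
  have memh_of_prm : ∀ x : g, prm x = 0 → x ∈ h := by
    intro x h1
    have h5 := hpr x
    rw [h1, add_zero] at h5
    rw [← h5]
    exact hprh x
  -- decomposition of elements of m
  have mdecomp : ∀ x ∈ m, ∃ c : Fin k → g, (∀ i, c i ∈ mi i) ∧ ∑ i, c i = x := by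
    intro x hx
    rw [← hsup] at hx
    obtain ⟨f, hf, hsum⟩ := (Submodule.mem_iSup_iff_exists_finsupp mi x).1 hx
    rw [Finsupp.sum_fintype _ _ (fun _ => rfl)] at hsum
    exact ⟨fun i => f i, hf, hsum⟩
  -- ## inner product space structure coming from B
  letI core : InnerProductSpace.Core ℝ g :=
    { inner := fun x y => B x y
      conj_inner_symm := fun x y => by simpa using hBsymm y x
      re_inner_nonneg := fun x => by simpa using hBnonneg x
      definite := fun x hx => hB0 x (by simpa using hx)
      add_left := fun x y z => by simp
      smul_left := fun x y r => by simp }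
  letI : NormedAddCommGroup g := core.toNormedAddCommGroup
  letI : InnerProductSpace ℝ g := InnerProductSpace.ofCore core.toCore
  haveI : CompleteSpace g := FiniteDimensional.complete ℝ g
  have hinner : ∀ x y : g, (inner ℝ x y : ℝ) = B x y := fun x y => rfl
  haveI hcompl : ∀ i : Fin k, CompleteSpace (mi i) := fun i =>
    FiniteDimensional.complete ℝ (mi i)
  -- orthogonal projections onto the mi
  set P : Fin k → g → g := fun i x => (Submodule.orthogonalProjection (mi i) x : g) with hP
  have Pmem : ∀ i x, P i x ∈ mi i := fun i x => (Submodule.orthogonalProjection (mi i) x).2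
  have Pchar : ∀ (i) (x z : g), z ∈ mi i → (∀ w ∈ mi i, B (x - z) w = 0) → P i x = z := by
    intro i x z hz hzw
    exact Submodule.eq_starProjection_of_mem_of_inner_eq_zero hz (fun w hw => by
      rw [hinner]; exact hzw w hw)
  have Psub : ∀ (i) (x : g), ∀ w ∈ mi i, B (x - P i x) w = 0 := by
    intro i x w hw
    rw [← hinner]
    exact Submodule.starProjection_inner_eq_zero x w hw
  have Padd : ∀ i x y, P i (x + y) = P i x + P i y := by
    intro i x y; simp [hP, map_add]
  have Pid : ∀ i, ∀ x ∈ mi i, P i x = x := by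
    intro i x hx
    exact Pchar i x x hx (by simp)
  have Pzero : ∀ (i) (x : g), (∀ w ∈ mi i, B x w = 0) → P i x = 0 := by
    intro i x hx
    exact Pchar i x 0 (zero_mem _) (by simpa using hx)
  have Psym : ∀ (i) (x y : g), B (P i x) y = B x (P i y) := by
    intro i x y
    rw [← hinner, ← hinner]
    exact Submodule.inner_starProjection_left_eq_right (mi i) x y
  have Pposself : ∀ (i) (x : g), B (P i x) x = B (P i x) (P i x) := by
    intro i x
    have h1 : B (x - P i x) (P i x) = 0 := Psub i x _ (Pmem i x)
    have h2 : B x (P i x) - B (P i x) (P i x) = 0 := by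
      simpa [map_sub, sub_eq_zero] using h1
    rw [hBsymm]
    linarith
  have Pcomm : ∀ i, ∀ v ∈ h, ∀ x : g, P i ⁅v, x⁆ = ⁅v, P i x⁆ := by
    intro i v hv x
    apply Pchar i _ _ (hhmi i v hv _ (Pmem i x))
    intro w hw
    -- B(⁅v,x⁆ - ⁅v, P i x⁆, w) = B(⁅v, x - P i x⁆, w) = -B(x - P i x, ⁅v,w⁆) = 0
    have h1 : ⁅v, x⁆ - ⁅v, P i x⁆ = ⁅v, x - P i x⁆ := by rw [lie_sub]
    rw [h1]
    have h2 := hBinv (x - P i x) w v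
    have h3 : B (x - P i x) ⁅v, w⁆ = 0 := Psub i x _ (hhmi i v hv w hw)
    linarith
  -- ## the metric operators Λ_i = id + P_i
  have key : ∀ i j, i ≠ j → ∀ a ∈ mi i, ∀ b ∈ mi j, ⁅a, b⁆ = 0 := by
    intro i j hij a ha b hb
    -- the metric operator
    have hPm : ∀ u : m, P i (u : g) ∈ m := fun u => misubm i (Pmem i u)
    set Λ : m →ₗ[ℝ] m :=
      { toFun := fun u => u + ⟨P i (u : g), hPm u⟩
        map_add' := by
          intro u v
          ext
          simp [hP, map_add]
          abel
        map_smul' := by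
          intro c u
          ext
          simp [hP, map_smul] } with hΛ
    have hΛval : ∀ u : m, (Λ u : g) = (u : g) + P i (u : g) := fun u => rfl
    have hsymΛ : ∀ u v : m, B (Λ u : g) (v : g) = B (u : g) (Λ v : g) := by
      intro u v
      rw [hΛval, hΛval]
      have e1 : B ((u : g) + P i (u : g)) (v : g)
          = B (u : g) (v : g) + B (P i (u : g)) (v : g) := by
        rw [map_add, LinearMap.add_apply]
      have e2 : B (u : g) ((v : g) + P i (v : g))
          = B (u : g) (v : g) + B (u : g) (P i (v : g)) := by
        rw [map_add]
      rw [e1, e2, Psym]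
    have hposΛ : ∀ u : m, u ≠ 0 → 0 < B (Λ u : g) (u : g) := by
      intro u hu
      rw [hΛval]
      have h1 : B ((u : g) + P i (u : g)) (u : g)
          = B (u : g) (u : g) + B (P i (u : g)) (u : g) := by
        simp [map_add]
      rw [h1, Pposself]
      have h2 : (u : g) ≠ 0 := fun hc => hu (Subtype.ext hc)
      have := hBpos _ h2
      have := hBnonneg (P i (u : g))
      linarith
    have hequivΛ : ∀ v ∈ h, ∀ w : m, ∀ hvw : ⁅v, (w : g)⁆ ∈ m,
        ((Λ ⟨⁅v, (w : g)⁆, hvw⟩ : m) : g) = ⁅v, (Λ w : g)⁆ := by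
      intro v hv w hvw
      rw [hΛval, hΛval]
      rw [lie_add, Pcomm i v hv]
    have hu : a + b ∈ m := add_mem (misubm i ha) (misubm j hb)
    have hmain := hequi Λ hsymΛ hposΛ hequivΛ ⟨a + b, hu⟩
    have hPa : P i a = a := Pid i a ha
    have hPb : P i b = 0 := by
      apply Pzero
      intro w hw
      exact horth j i (Ne.symm hij) b hb w hw
    have hΛu : (Λ ⟨a + b, hu⟩ : g) = a + a + b := by
      rw [hΛval]
      simp only [Padd, hPa, hPb]
      abel
    rw [hΛu] at hmain
    have hlie : ⁅a + a + b, a + b⁆ = ⁅a, b⁆ := by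
      have hba : ⁅b, a⁆ = -⁅a, b⁆ := by rw [← lie_skew]
      simp only [add_lie, lie_add, lie_self, hba]
      abel
    have hmain2 : prm ⁅a + a + b, a + b⁆ = 0 := hmain
    rw [hlie] at hmain2
    -- so ⁅a,b⁆ ∈ h
    have habh : ⁅a, b⁆ ∈ h := memh_of_prm _ hmain2
    -- now show it is zero
    apply hB0
    have h1 := hBinv b ⁅a, b⁆ a
    have h2 : ⁅a, ⁅a, b⁆⁆ ∈ mi i := by
      have := hhmi i ⁅a, b⁆ habh a ha
      have h3 : ⁅a, ⁅a, b⁆⁆ = -⁅⁅a, b⁆, a⁆ := (lie_skew _ _).symm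
      rw [h3]
      exact neg_mem this
    have h4 : B b ⁅a, ⁅a, b⁆⁆ = 0 := horth j i (Ne.symm hij) b hb _ h2
    linarith
  -- ## prm of brackets within mi i stays in mi i
  have in_mi_of_perp : ∀ (i) (x : g), x ∈ m → (∀ j, j ≠ i → ∀ c ∈ mi j, B x c = 0) →
      x ∈ mi i := by
    intro i x hxm hperp
    obtain ⟨c, hc, hcs⟩ := mdecomp x hxm
    have hzero : ∀ j, j ≠ i → c j = 0 := by
      intro j hj
      apply hB0
      have h1 : B x (c j) = 0 := hperp j hj (c j) (hc j)
      have h2 : B x (c j) = ∑ l, B (c l) (c j) := by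
        rw [← hcs]
        simp [map_sum, LinearMap.sum_apply]
      have h3 : ∑ l, B (c l) (c j) = B (c j) (c j) := by
        apply Finset.sum_eq_single
        · intro l _ hlj
          exact horth l j hlj (c l) (hc l) (c j) (hc j)
        · simp
      rw [h2, h3] at h1
      exact h1
    have : x = c i := by
      rw [← hcs]
      apply Finset.sum_eq_single
      · intro l _ hli
        exact hzero l hli
      · simp
    rw [this]
    exact hc i
  have L2 : ∀ i, ∀ a ∈ mi i, ∀ b ∈ mi i, prm ⁅a, b⁆ ∈ mi i := by
    intro i a ha b hb
    apply in_mi_of_perp i _ (hprm _)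
    intro j hj c hc
    have h1 : B (prh ⁅a, b⁆) c = 0 := hmh _ (hprh _) _ (misubm j hc)
    have h2 : B (prh ⁅a, b⁆) c + B (prm ⁅a, b⁆) c = B ⁅a, b⁆ c := by
      rw [← LinearMap.add_apply, ← map_add, hpr]
    have h3 : ⁅a, c⁆ = 0 := key i j (Ne.symm hj) a ha c hc
    have h4 := hBinv b c a
    rw [h3] at h4
    simp at h4
    linarith
  -- ## reformulation of gi as a span
  have hgi' : ∀ i, gi i = Submodule.span ℝ
      ({x : g | ∃ a ∈ mi i, ∃ b ∈ mi i, ⁅a, b⁆ = x} ∪ (mi i : Set g)) := by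
    intro i
    rw [Submodule.span_union, Submodule.span_eq]
    exact hgi i
  have mi_le_gi : ∀ i, mi i ≤ gi i := by
    intro i
    rw [hgi i]
    exact le_sup_right
  have bra_mem_gi : ∀ i, ∀ a ∈ mi i, ∀ b ∈ mi i, ⁅a, b⁆ ∈ gi i := by
    intro i a ha b hb
    rw [hgi i]
    exact Submodule.mem_sup_left (Submodule.subset_span ⟨a, ha, b, hb, rfl⟩)
  -- ## part 2 preliminaries : brackets between different gi vanish
  have Z0 : ∀ i j, i ≠ j → ∀ x ∈ mi i, ∀ y ∈ gi j, ⁅x, y⁆ = 0 := by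
    intro i j hij x hx y hy
    rw [hgi' j] at hy
    induction hy using Submodule.span_induction with
    | mem y hy =>
      rcases hy with hy | hy
      · obtain ⟨c, hc, d, hd, rfl⟩ := hy
        have h1 : ⁅x, c⁆ = 0 := key i j hij x hx c hc
        have h2 : ⁅x, d⁆ = 0 := key i j hij x hx d hd
        rw [leibniz_lie, h1, h2]
        simp
      · exact key i j hij x hx y hy
    | zero => simp
    | add y z _ _ hy hz => rw [lie_add, hy, hz]; simp
    | smul a y _ hy => rw [lie_smul, hy]; simp
  have Z : ∀ i j, i ≠ j → ∀ x ∈ gi i, ∀ y ∈ gi j, ⁅x, y⁆ = 0 := by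
    intro i j hij x hx y hy
    rw [hgi' i] at hx
    induction hx using Submodule.span_induction with
    | mem x hx =>
      rcases hx with hx | hx
      · obtain ⟨a, ha, b, hb, rfl⟩ := hx
        rw [lie_lie, Z0 i j hij b hb y hy, Z0 i j hij a ha y hy]
        simp
      · exact Z0 i j hij x hx y hy
    | zero => simp
    | add w z _ _ hw hz => rw [add_lie, hw, hz]; simp
    | smul a w _ hw => rw [smul_lie, hw]; simp
  have lsum : ∀ (y : g) (c : Fin k → g), ⁅(∑ l, c l : g), y⁆ = ∑ l, ⁅c l, y⁆ := by
    intro y c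
    let L : g →ₗ[ℝ] g :=
      { toFun := fun x => ⁅x, y⁆
        map_add' := fun a b => add_lie a b y
        map_smul' := fun r a => smul_lie r a y }
    exact map_sum L c Finset.univ
  -- ## part 1 : each gi is an ideal
  have ideal_h : ∀ i, ∀ v ∈ h, ∀ y ∈ gi i, ⁅v, y⁆ ∈ gi i := by
    intro i v hv y hy
    rw [hgi' i] at hy
    induction hy using Submodule.span_induction with
    | mem y hy =>
      rcases hy with hy | hy
      · obtain ⟨a, ha, b, hb, rfl⟩ := hy
        have h1 : ⁅v, ⁅a, b⁆⁆ = ⁅⁅v, a⁆, b⁆ + ⁅a, ⁅v, b⁆⁆ := by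
          rw [leibniz_lie]
        rw [h1]
        exact add_mem (bra_mem_gi i _ (hhmi i v hv a ha) _ hb)
          (bra_mem_gi i _ ha _ (hhmi i v hv b hb))
      · exact mi_le_gi i (hhmi i v hv y hy)
    | zero => simp
    | add y z _ _ hy hz => rw [lie_add]; exact add_mem hy hz
    | smul a y _ hy => rw [lie_smul]; exact Submodule.smul_mem _ _ hy
  have ideal_mi : ∀ i, ∀ x ∈ mi i, ∀ y ∈ gi i, ⁅x, y⁆ ∈ gi i := by
    intro i x hx y hy
    rw [hgi' i] at hy
    induction hy using Submodule.span_induction with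
    | mem y hy =>
      rcases hy with hy | hy
      · obtain ⟨a, ha, b, hb, rfl⟩ := hy
        have hsplit : ⁅a, b⁆ = prh ⁅a, b⁆ + prm ⁅a, b⁆ := (hpr _).symm
        rw [hsplit, lie_add]
        apply add_mem
        · have h1 : ⁅x, prh ⁅a, b⁆⁆ = -⁅prh ⁅a, b⁆, x⁆ := (lie_skew _ _).symm
          rw [h1]
          exact neg_mem (mi_le_gi i (hhmi i _ (hprh _) x hx))
        · exact bra_mem_gi i x hx _ (L2 i a ha b hb)
      · exact bra_mem_gi i x hx y hy
    | zero => simp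
    | add y z _ _ hy hz => rw [lie_add]; exact add_mem hy hz
    | smul a y _ hy => rw [lie_smul]; exact Submodule.smul_mem _ _ hy
  have part1 : ∀ i, ∀ x : g, ∀ y ∈ gi i, ⁅x, y⁆ ∈ gi i := by
    intro i x y hy
    have hx : x = prh x + prm x := (hpr x).symm
    rw [hx, add_lie]
    apply add_mem
    · exact ideal_h i _ (hprh x) y hy
    · obtain ⟨c, hc, hcs⟩ := mdecomp (prm x) (hprm x)
      rw [← hcs, lsum]
      apply Submodule.sum_mem
      intro l _
      rcases eq_or_ne l i with rfl | hli
      · exact ideal_mi l _ (hc l) y hy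
      · rw [Z0 l i hli _ (hc l) y hy]
        exact zero_mem _
  -- ## orthogonality of the gi
  have O0 : ∀ i j, i ≠ j → ∀ x ∈ mi i, ∀ y ∈ gi j, B x y = 0 := by
    intro i j hij x hx y hy
    rw [hgi' j] at hy
    induction hy using Submodule.span_induction with
    | mem y hy =>
      rcases hy with hy | hy
      · obtain ⟨c, hc, d, hd, rfl⟩ := hy
        have h1 := hBinv d x c
        have h2 : ⁅c, x⁆ = 0 := key j i (Ne.symm hij) c hc x hx
        rw [h2] at h1
        simp at h1
        rw [hBsymm]
        linarith
      · exact horth i j hij x hx y hy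
    | zero => simp
    | add y z _ _ hy hz => rw [map_add, hy, hz]; simp
    | smul a y _ hy => rw [map_smul, hy]; simp
  have O : ∀ i j, i ≠ j → ∀ x ∈ gi i, ∀ y ∈ gi j, B x y = 0 := by
    intro i j hij x hx y hy
    rw [hgi' i] at hx
    induction hx using Submodule.span_induction with
    | mem x hx =>
      rcases hx with hx | hx
      · obtain ⟨a, ha, b, hb, rfl⟩ := hx
        have h1 := hBinv b y a
        have h2 : ⁅a, y⁆ = 0 := Z0 i j hij a ha y hy
        rw [h2] at h1
        simp at h1
        linarith
      · exact O0 i j hij x hx y hy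
    | zero => simp
    | add w z _ _ hw hz =>
      rw [map_add, LinearMap.add_apply, hw, hz, add_zero]
    | smul a w _ hw =>
      rw [map_smul, LinearMap.smul_apply, hw, smul_zero]
  -- ## the sum of the gi is everything
  have hN : (⨆ i, gi i) = ⊤ := by
    set N : Submodule ℝ g := ⨆ i, gi i with hNdef
    have gi_le_N : ∀ i, gi i ≤ N := fun i => le_iSup gi i
    have hNideal : ∀ z : g, ∀ y ∈ N, ⁅z, y⁆ ∈ N := by
      intro z y hy
      set N' : Submodule ℝ g :=
        { carrier := {y | ⁅z, y⁆ ∈ N}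
          add_mem' := fun ha hb => by
            simp only [Set.mem_setOf_eq, lie_add] at *
            exact add_mem ha hb
          zero_mem' := by simp
          smul_mem' := fun c y hy => by
            simp only [Set.mem_setOf_eq, lie_smul] at *
            exact Submodule.smul_mem _ _ hy }
      have : N ≤ N' := by
        rw [hNdef]
        apply iSup_le
        intro i x hx
        exact gi_le_N i (part1 i z x hx)
      exact this hy
    -- the B-orthogonal complement of N is a Lie ideal contained in h
    set I : LieIdeal ℝ g :=
      { carrier := {x | ∀ y ∈ N, B x y = 0}
        add_mem' := fun ha hb => by
          intro y hy
          simp only [Set.mem_setOf_eq] at *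
          rw [map_add, LinearMap.add_apply, ha y hy, hb y hy, add_zero]
        zero_mem' := by
          intro y hy
          simp
        smul_mem' := fun c x hx => by
          intro y hy
          simp only [Set.mem_setOf_eq] at *
          rw [map_smul, LinearMap.smul_apply, hx y hy, smul_zero]
        lie_mem := by
          intro z x hx
          intro y hy
          simp only [Set.mem_setOf_eq] at *
          have h1 := hBinv x y z
          have h2 : B x ⁅z, y⁆ = 0 := hx _ (hNideal z y hy)
          linarith }
    have hIh : ∀ x ∈ I, x ∈ h := by
      intro x hx
      apply memh_of_perp
      intro y hy
      apply hx
      obtain ⟨d, hd, hds⟩ := mdecomp y hy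
      rw [← hds]
      apply Submodule.sum_mem
      intro l _
      exact gi_le_N l (mi_le_gi l (hd l))
    have hIbot := hnoideal I hIh
    -- conclude N = ⊤ via inner product orthogonality
    haveI : CompleteSpace N := FiniteDimensional.complete ℝ N
    rw [← Submodule.orthogonal_eq_bot_iff]
    rw [Submodule.eq_bot_iff]
    intro x hx
    have hxI : x ∈ I := by
      intro y hy
      rw [← hinner, ← inner_conj_symm]
      have := hx y hy
      rw [this]
      simp
    rw [hIbot] at hxI
    simpa using hxI
  -- ## decomposition of arbitrary elements
  have decomp : ∀ x : g, ∃ c : Fin k → g, (∀ i, c i ∈ gi i) ∧ ∑ i, c i = x := by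
    intro x
    have hx : x ∈ ⨆ i, gi i := by rw [hN]; trivial
    obtain ⟨f, hf, hsum⟩ := (Submodule.mem_iSup_iff_exists_finsupp gi x).1 hx
    rw [Finsupp.sum_fintype _ _ (fun _ => rfl)] at hsum
    exact ⟨fun i => f i, hf, hsum⟩
  have uniq0 : ∀ c : Fin k → g, (∀ i, c i ∈ gi i) → ∑ i, c i = 0 → ∀ i, c i = 0 := by
    intro c hc hcs j
    apply hB0
    have h1 : B (c j) (∑ i, c i) = B (c j) (c j) := by
      rw [map_sum]
      apply Finset.sum_eq_single
      · intro l _ hlj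
        exact O j l (Ne.symm hlj) (c j) (hc j) (c l) (hc l)
      · simp
    rw [hcs] at h1
    simp at h1
    exact h1.symm
  have part3 : ∀ x : g, ∃! c : Fin k → g, (∀ i, c i ∈ gi i) ∧ ∑ i, c i = x := by
    intro x
    obtain ⟨c, hc, hcs⟩ := decomp x
    refine ⟨c, ⟨hc, hcs⟩, ?_⟩
    rintro c' ⟨hc', hcs'⟩
    funext i
    have hd : ∀ i, (c' - c) i = 0 := by
      apply uniq0
      · intro i
        exact sub_mem (hc' i) (hc i)
      · simp only [Pi.sub_apply, Finset.sum_sub_distrib, hcs, hcs', sub_self]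
    have := hd i
    simpa [sub_eq_zero] using this
  -- ## decomposition of h
  have part4 : ∀ x ∈ h, ∃! c : Fin k → g,
      (∀ i, c i ∈ h ∧ c i ∈ gi i) ∧ ∑ i, c i = x := by
    intro x hx
    obtain ⟨c, hc, hcs⟩ := decomp x
    have hch : ∀ i, c i ∈ h := by
      intro i
      apply memh_of_perp
      intro y hy
      obtain ⟨d, hd, hds⟩ := mdecomp y hy
      rw [← hds, map_sum]
      apply Finset.sum_eq_zero
      intro j _
      rcases eq_or_ne j i with rfl | hji
      · -- B (c j) (d j) = B x (d j) = 0
        have h1 : ∑ l, B (c l) (d j) = B x (d j) := by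
          rw [← hcs]
          simp [map_sum, LinearMap.sum_apply]
        have h2 : ∑ l, B (c l) (d j) = B (c j) (d j) := by
          apply Finset.sum_eq_single
          · intro l _ hlj
            exact O l j hlj (c l) (hc l) (d j) (mi_le_gi j (hd j))
          · simp
        have h3 : B x (d j) = 0 := hmh x hx (d j) (misubm j (hd j))
        rw [← h2, h1, h3]
      · exact O i j (Ne.symm hji) (c i) (hc i) (d j) (mi_le_gi j (hd j))
    refine ⟨c, ⟨fun i => ⟨hch i, hc i⟩, hcs⟩, ?_⟩
    rintro c' ⟨hc', hcs'⟩
    have hu := part3 x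
    exact hu.unique (⟨fun i => (hc' i).2, hcs'⟩) ⟨hc, hcs⟩
  exact ⟨part1, Z, part3, part4⟩
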